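/- For odd n = 2k+1 with n ≥ 9, the meander with top composition (n, 1^{k-4}, n, 1^{k-1}) and bottom composition (1^{k-1}, n, 1^{k-4}, n) contains a cycle, where 1^m denotes m consecutive parts equal to 1. -/
import Mathlib


/-- `BlockArc l u v` holds when `u` and `v` (0-indexed positions) are joined by an
arc of the system of nested arcs determined by the composition `l`: the `i`-th part
`p = l.getD i 0` occupies positions `a, …, a + p - 1` where `a = (l.take i).sum`,
and contributes arcs joining `a + t` and `a + (p - 1 - t)` for `2t + 1 < p`. -/
def BlockArc (l : List ℕ) (u v : ℕ) : Prop :=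
  ∃ i < l.length, ∃ t : ℕ, 2 * t + 1 < l.getD i 0 ∧
    u = (l.take i).sum + t ∧ v = (l.take i).sum + (l.getD i 0 - 1 - t)

/-- The meander graph of the pair of compositions `(lam, mu)` on vertices
`0, …, n-1`: upper arcs from `lam`, lower arcs from `mu`. -/
def MeanderGraph (n : ℕ) (lam mu : List ℕ) : SimpleGraph (Fin n) :=
  SimpleGraph.fromRel (fun u v => BlockArc lam (u : ℕ) (v : ℕ) ∨ BlockArc mu (u : ℕ) (v : ℕ))

/-- A position `v` is covered by (is an endpoint of) an arc of the composition `l`. -/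
def Covered (l : List ℕ) (v : ℕ) : Prop :=
  ∃ u, BlockArc l u v ∨ BlockArc l v u

/-- A connected component of the meander graph is a cycle component when every one
of its vertices is covered by both an upper and a lower arc (i.e. has degree 2 in
the meander multigraph). -/
def IsCycleComp (n : ℕ) (lam mu : List ℕ)
    (c : (MeanderGraph n lam mu).ConnectedComponent) : Prop :=
  ∀ v : Fin n, (MeanderGraph n lam mu).connectedComponentMk v = c →
    Covered lam (v : ℕ) ∧ Covered mu (v : ℕ)

/-- The number of cycles of the meander `(lam, mu)` on `n` nodes. -/
noncomputable def numCycles (n : ℕ) (lam mu : List ℕ) : ℕ :=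
  {c : (MeanderGraph n lam mu).ConnectedComponent | IsCycleComp n lam mu c}.ncard

/-- The number of paths (including isolated vertices) of the meander `(lam, mu)`. -/
noncomputable def numPaths (n : ℕ) (lam mu : List ℕ) : ℕ :=
  {c : (MeanderGraph n lam mu).ConnectedComponent | ¬ IsCycleComp n lam mu c}.ncard

/-- The index of the meander `(lam, mu)` on `n` nodes:
twice the number of cycles plus the number of paths. -/
noncomputable def meanderIndex (n : ℕ) (lam mu : List ℕ) : ℕ :=
  2 * numCycles n lam mu + numPaths n lam mu

/-- For odd `n = 2k+1` with `n ≥ 9` (i.e. `k ≥ 4`), the meander with top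
composition `(n, 1^{k-4}, n, 1^{k-1})` and bottom composition
`(1^{k-1}, n, 1^{k-4}, n)` (both summing to `2n + 2k - 5 = 6k - 3`)
contains a cycle. -/
lemma arc_rep (m u v : ℕ) : ¬ BlockArc (List.replicate m 1) u v := by
  rintro ⟨i, hi, t, h1, -, -⟩
  rw [List.length_replicate] at hi
  have : (List.replicate m 1).getD i 0 = 1 := by
    simp [List.getD_eq_getElem?_getD, List.getElem?_replicate, hi]
  omega

lemma arc_single (n u v : ℕ) : BlockArc [n] u v ↔ ∃ t, 2 * t + 1 < n ∧ u = t ∧ v = n - 1 - t := by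
  constructor
  · rintro ⟨i, hi, t, h1, h2, h3⟩
    simp only [List.length_singleton, Nat.lt_one_iff] at hi
    subst hi
    simp only [List.take_zero, List.sum_nil, Nat.zero_add, List.getD] at h1 h2 h3
    exact ⟨t, by simpa using h1, by simpa using h2, by simpa using h3⟩
  · rintro ⟨t, h1, h2, h3⟩
    exact ⟨0, by simp, t, by simpa using h1, by simpa using h2, by simpa using h3⟩

lemma arc_append (xs ys : List ℕ) (u v : ℕ) :
    BlockArc (xs ++ ys) u v ↔
      BlockArc xs u v ∨ ∃ a b, BlockArc ys a b ∧ u = xs.sum + a ∧ v = xs.sum + b := by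
  constructor
  · rintro ⟨i, hi, t, h1, h2, h3⟩
    rw [List.length_append] at hi
    by_cases hix : i < xs.length
    · left
      refine ⟨i, hix, t, ?_, ?_, ?_⟩
      · rwa [List.getD_append _ _ _ _ hix] at h1
      · rwa [List.take_append, Nat.sub_eq_zero_of_le hix.le, List.take_zero,
          List.append_nil] at h2
      · rwa [List.take_append, Nat.sub_eq_zero_of_le hix.le, List.take_zero,
          List.append_nil, List.getD_append _ _ _ _ hix] at h3
    · right
      push_neg at hix
      rw [List.getD_append_right _ _ _ _ hix] at h1 h3
      rw [List.take_append, List.take_of_length_le hix, List.sum_append] at h2 h3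
      exact ⟨(ys.take (i - xs.length)).sum + t,
        (ys.take (i - xs.length)).sum + (ys.getD (i - xs.length) 0 - 1 - t),
        ⟨i - xs.length, by omega, t, h1, rfl, rfl⟩, by omega, by omega⟩
  · rintro (⟨i, hi, t, h1, h2, h3⟩ | ⟨a, b, ⟨i, hi, t, h1, h2, h3⟩, hu, hv⟩)
    · refine ⟨i, by rw [List.length_append]; omega, t, ?_, ?_, ?_⟩
      · rwa [List.getD_append _ _ _ _ hi]
      · rwa [List.take_append, Nat.sub_eq_zero_of_le hi.le, List.take_zero,
          List.append_nil]
      · rwa [List.take_append, Nat.sub_eq_zero_of_le hi.le, List.take_zero,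
          List.append_nil, List.getD_append _ _ _ _ hi]
    · refine ⟨xs.length + i, by rw [List.length_append]; omega, t, ?_, ?_, ?_⟩
      · rwa [List.getD_append_right _ _ _ _ (by omega), Nat.add_sub_cancel_left]
      · rw [List.take_append, List.take_of_length_le (by omega), List.sum_append,
          Nat.add_sub_cancel_left]
        omega
      · rw [List.getD_append_right _ _ _ _ (by omega), List.take_append,
          List.take_of_length_le (by omega), List.sum_append, Nat.add_sub_cancel_left,
          hv, h3, Nat.add_assoc]

lemma arc_rep_iff (m u v : ℕ) : BlockArc (List.replicate m 1) u v ↔ False :=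
  iff_false_intro (arc_rep m u v)

lemma sum_rep (m : ℕ) : (List.replicate m 1).sum = m := by simp

lemma arc_lam (k u v : ℕ) :
    BlockArc ([2 * k + 1] ++ List.replicate (k - 4) 1 ++ [2 * k + 1] ++ List.replicate (k - 1) 1) u v ↔
      ∃ t, 2 * t + 1 < 2 * k + 1 ∧
        ((u = t ∧ v = 2 * k - t) ∨
         (u = (2 * k + 1) + (k - 4) + t ∧ v = (2 * k + 1) + (k - 4) + (2 * k - t))) := by
  simp only [List.append_assoc, arc_append, arc_single, arc_rep_iff, false_and, and_false,
    exists_false, false_or, or_false, exists_and_left, List.sum_cons, List.sum_nil, sum_rep]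
  constructor
  · rintro (⟨t, h1, h2, h3⟩ | ⟨a, b, ⟨a1, b1, ⟨t, h1, h2, h3⟩, ha, hb⟩, hu, hv⟩) <;>
      exact ⟨t, h1, by omega⟩
  · rintro ⟨t, h1, (⟨hu, hv⟩ | ⟨hu, hv⟩)⟩
    · exact Or.inl ⟨t, h1, by omega, by omega⟩
    · exact Or.inr ⟨k - 4 + t, k - 4 + (2 * k + 1 - 1 - t),
        ⟨t, 2 * k + 1 - 1 - t, ⟨t, h1, rfl, rfl⟩, rfl, rfl⟩, by omega, by omega⟩

lemma arc_mu (k u v : ℕ) :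
    BlockArc (List.replicate (k - 1) 1 ++ [2 * k + 1] ++ List.replicate (k - 4) 1 ++ [2 * k + 1]) u v ↔
      ∃ t, 2 * t + 1 < 2 * k + 1 ∧
        ((u = (k - 1) + t ∧ v = (k - 1) + (2 * k - t)) ∨
         (u = (k - 1) + (2 * k + 1) + (k - 4) + t ∧
          v = (k - 1) + (2 * k + 1) + (k - 4) + (2 * k - t))) := by
  simp only [List.append_assoc, arc_append, arc_single, arc_rep_iff, false_and, and_false,
    exists_false, false_or, or_false, exists_and_left, List.sum_cons, List.sum_nil, sum_rep]
  constructor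
  · rintro ⟨a, b, (⟨t, h1, h2, h3⟩ | ⟨a1, b1, ⟨a2, b2, ⟨t, h1, h2, h3⟩, ha1, hb1⟩, ha, hb⟩), hu, hv⟩ <;>
      exact ⟨t, h1, by omega⟩
  · rintro ⟨t, h1, (⟨hu, hv⟩ | ⟨hu, hv⟩)⟩
    · exact ⟨t, 2 * k + 1 - 1 - t, Or.inl ⟨t, h1, rfl, rfl⟩, by omega, by omega⟩
    · exact ⟨2 * k + 1 + 0 + (k - 4 + t), 2 * k + 1 + 0 + (k - 4 + (2 * k + 1 - 1 - t)),
        Or.inr ⟨k - 4 + t, k - 4 + (2 * k + 1 - 1 - t),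
          ⟨t, 2 * k + 1 - 1 - t, ⟨t, h1, rfl, rfl⟩, rfl, rfl⟩, rfl, rfl⟩, by omega, by omega⟩



lemma meander_step (k : ℕ) (hk : 4 ≤ k) (u w : Fin (6 * k - 3))
    (h : (MeanderGraph (6 * k - 3)
      ([2 * k + 1] ++ List.replicate (k - 4) 1 ++ [2 * k + 1] ++ List.replicate (k - 1) 1)
      (List.replicate (k - 1) 1 ++ [2 * k + 1] ++ List.replicate (k - 4) 1 ++ [2 * k + 1])).Adj u w)
    (hu : (u : ℕ) = k - 1 ∨ (u : ℕ) = k + 1 ∨ (u : ℕ) = 3 * k - 3 ∨ (u : ℕ) = 3 * k - 1 ∨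
      (u : ℕ) = 5 * k - 5 ∨ (u : ℕ) = 5 * k - 3) :
    (w : ℕ) = k - 1 ∨ (w : ℕ) = k + 1 ∨ (w : ℕ) = 3 * k - 3 ∨ (w : ℕ) = 3 * k - 1 ∨
      (w : ℕ) = 5 * k - 5 ∨ (w : ℕ) = 5 * k - 3 := by
  rw [MeanderGraph, SimpleGraph.fromRel_adj] at h
  obtain ⟨-, h⟩ := h
  rcases h with (h | h) | (h | h) <;>
    [rw [arc_lam] at h; rw [arc_mu] at h; rw [arc_lam] at h; rw [arc_mu] at h] <;>
    · obtain ⟨t, h1, h2⟩ := h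
      omega

lemma meander_walk (k : ℕ) (hk : 4 ≤ k) {a b : Fin (6 * k - 3)}
    (p : (MeanderGraph (6 * k - 3)
      ([2 * k + 1] ++ List.replicate (k - 4) 1 ++ [2 * k + 1] ++ List.replicate (k - 1) 1)
      (List.replicate (k - 1) 1 ++ [2 * k + 1] ++ List.replicate (k - 4) 1 ++ [2 * k + 1])).Walk a b)
    (ha : (a : ℕ) = k - 1 ∨ (a : ℕ) = k + 1 ∨ (a : ℕ) = 3 * k - 3 ∨ (a : ℕ) = 3 * k - 1 ∨
      (a : ℕ) = 5 * k - 5 ∨ (a : ℕ) = 5 * k - 3) :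
    (b : ℕ) = k - 1 ∨ (b : ℕ) = k + 1 ∨ (b : ℕ) = 3 * k - 3 ∨ (b : ℕ) = 3 * k - 1 ∨
      (b : ℕ) = 5 * k - 5 ∨ (b : ℕ) = 5 * k - 3 := by
  induction p with
  | nil => exact ha
  | cons h q ih => exact ih (meander_step k hk _ _ h ha)

theorem stmt13 (k : ℕ) (hk : 4 ≤ k) :
    ∃ c, IsCycleComp (6 * k - 3)
      ([2 * k + 1] ++ List.replicate (k - 4) 1 ++ [2 * k + 1] ++ List.replicate (k - 1) 1)
      (List.replicate (k - 1) 1 ++ [2 * k + 1] ++ List.replicate (k - 4) 1 ++ [2 * k + 1])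
      c := by
  classical
  refine ⟨(MeanderGraph (6 * k - 3) _ _).connectedComponentMk ⟨k - 1, by omega⟩, ?_⟩
  intro v hv
  rw [SimpleGraph.ConnectedComponent.eq] at hv
  obtain ⟨p⟩ := hv.symm
  have hPv := meander_walk k hk p (Or.inl rfl)
  constructor
  · rcases hPv with h | h | h | h | h | h
    · exact ⟨k + 1, Or.inr ((arc_lam k _ _).mpr ⟨k - 1, by omega, by omega⟩)⟩
    · exact ⟨k - 1, Or.inl ((arc_lam k _ _).mpr ⟨k - 1, by omega, by omega⟩)⟩
    · exact ⟨5 * k - 3, Or.inr ((arc_lam k _ _).mpr ⟨0, by omega, by omega⟩)⟩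
    · exact ⟨5 * k - 5, Or.inr ((arc_lam k _ _).mpr ⟨2, by omega, by omega⟩)⟩
    · exact ⟨3 * k - 1, Or.inl ((arc_lam k _ _).mpr ⟨2, by omega, by omega⟩)⟩
    · exact ⟨3 * k - 3, Or.inl ((arc_lam k _ _).mpr ⟨0, by omega, by omega⟩)⟩
  · rcases hPv with h | h | h | h | h | h
    · exact ⟨3 * k - 1, Or.inr ((arc_mu k _ _).mpr ⟨0, by omega, by omega⟩)⟩
    · exact ⟨3 * k - 3, Or.inr ((arc_mu k _ _).mpr ⟨2, by omega, by omega⟩)⟩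
    · exact ⟨k + 1, Or.inl ((arc_mu k _ _).mpr ⟨2, by omega, by omega⟩)⟩
    · exact ⟨k - 1, Or.inl ((arc_mu k _ _).mpr ⟨0, by omega, by omega⟩)⟩
    · exact ⟨5 * k - 3, Or.inr ((arc_mu k _ _).mpr ⟨k - 1, by omega, by omega⟩)⟩
    · exact ⟨5 * k - 5, Or.inl ((arc_mu k _ _).mpr ⟨k - 1, by omega, by omega⟩)⟩
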